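/- The Morley-type vertex basis function satisfies: for $p_{0i}(\xi) = \frac{1}{2^{n+1}}\big(2 + \sum_{k=1}^n(\xi_{ik}\xi_k - \xi_k^2)\big)\prod_{k=1}^n(1+\xi_{ik}\xi_k) + \frac{3}{2^{n+3}}\sum_{k=1}^n \xi_{ik}\xi_k(\xi_k^2-1)^2$, the restriction of its second derivative in $\xi_k$ to the face $\xi_k = \pm 1$ equals $\mp\frac{3}{2^n}\xi_{ik}\prod_{j\ne k}(1+\xi_{ij}\xi_j) \pm \frac{3}{2^n}\xi_{ik}$, and hence its integral over the face $[-1,1]^{n-1}$ is zero. -/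

import Mathlib

open MeasureTheory

lemma poly_hd1 (a0 a1 a2 a3 a5 t : ℝ) :
    HasDerivAt (fun t : ℝ => a0 + a1*t + a2*t^2 + a3*t^3 + a5*t^5)
      (a1 + (2*a2)*t + (3*a3)*t^2 + (5*a5)*t^4) t := by
  have h := ((((hasDerivAt_const t a0).add ((hasDerivAt_id t).const_mul a1)).add
      ((hasDerivAt_pow 2 t).const_mul a2)).add ((hasDerivAt_pow 3 t).const_mul a3)).add
      ((hasDerivAt_pow 5 t).const_mul a5)
  refine HasDerivAt.congr_deriv h ?_
  push_cast
  ring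

lemma poly_hd2 (a1 a2 a3 a5 t : ℝ) :
    HasDerivAt (fun t : ℝ => a1 + (2*a2)*t + (3*a3)*t^2 + (5*a5)*t^4)
      (2*a2 + 6*a3*t + 20*a5*t^3) t := by
  have h := ((((hasDerivAt_const t a1).add ((hasDerivAt_id t).const_mul (2*a2))).add
      ((hasDerivAt_pow 2 t).const_mul (3*a3))).add ((hasDerivAt_pow 4 t).const_mul (5*a5)))
  refine HasDerivAt.congr_deriv h ?_
  push_cast
  ring

lemma second_deriv_poly (a0 a1 a2 a3 a5 t : ℝ) :
    deriv (deriv (fun t : ℝ => a0 + a1*t + a2*t^2 + a3*t^3 + a5*t^5)) t =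
      2*a2 + 6*a3*t + 20*a5*t^3 := by
  have h1 : deriv (fun t : ℝ => a0 + a1*t + a2*t^2 + a3*t^3 + a5*t^5)
      = fun t => a1 + (2*a2)*t + (3*a3)*t^2 + (5*a5)*t^4 :=
    funext fun t => (poly_hd1 a0 a1 a2 a3 a5 t).deriv
  rw [h1]
  exact (poly_hd2 a1 a2 a3 a5 t).deriv

lemma icc_lin_integral (c : ℝ) : ∫ x in Set.Icc (-1:ℝ) 1, (1 + c * x) = 2 := by
  rw [MeasureTheory.integral_Icc_eq_integral_Ioc,
    ← intervalIntegral.integral_of_le (by norm_num : (-1:ℝ) ≤ 1)]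
  rw [intervalIntegral.integral_add intervalIntegrable_const
    ((intervalIntegral.intervalIntegrable_id).const_mul c),
    intervalIntegral.integral_const_mul, integral_id]
  simp
  norm_num

lemma cube_integral_zero (n : ℕ) (ε : Fin n → ℝ) (k : Fin n) (σ e : ℝ) :
    ∫ ξ in (Set.univ.pi fun _ : Fin n => Set.Icc (-1 : ℝ) 1),
      (-σ * (3 / 2 ^ n) * e * ∏ j ∈ Finset.univ.erase k, (1 + ε j * ξ j)
        + σ * (3 / 2 ^ n) * e) = 0 := by
  set S := Set.univ.pi fun _ : Fin n => Set.Icc (-1 : ℝ) 1 with hSdef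
  set c : Fin n → ℝ := Function.update ε k 0 with hcdef
  have hck : c k = 0 := Function.update_self k 0 ε
  have hcj : ∀ j ∈ Finset.univ.erase k, c j = ε j := fun j hj =>
    Function.update_of_ne (Finset.ne_of_mem_erase hj) 0 ε
  have hSm : MeasurableSet S := MeasurableSet.univ_pi fun _ => measurableSet_Icc
  have hvol : volume S = ENNReal.ofReal 2 ^ n := by
    rw [hSdef, volume_pi_pi]
    simp [Real.volume_Icc]
    norm_num
  have hcont : Continuous fun ξ : Fin n → ℝ => ∏ j ∈ Finset.univ.erase k, (1 + ε j * ξ j) := by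
    apply continuous_finset_prod
    intro j _
    fun_prop
  have hcomp : IsCompact S := isCompact_univ_pi fun _ => isCompact_Icc
  have hint1 : IntegrableOn (fun ξ : Fin n → ℝ =>
      -σ * (3 / 2 ^ n) * e * ∏ j ∈ Finset.univ.erase k, (1 + ε j * ξ j)) S :=
    ((continuous_const.mul hcont).continuousOn).integrableOn_compact hcomp
  have hint2 : IntegrableOn (fun _ : Fin n → ℝ => σ * (3 / 2 ^ n) * e) S := by
    apply integrableOn_const
    rw [hvol]; exact (ENNReal.pow_lt_top ENNReal.ofReal_lt_top).ne
    exact enorm_ne_top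
  rw [integral_add hint1 hint2, setIntegral_const, integral_const_mul]
  have hprod : ∫ ξ in S, ∏ j ∈ Finset.univ.erase k, (1 + ε j * ξ j) = 2 ^ n := by
    rw [← integral_indicator hSm]
    have hident : S.indicator (fun ξ : Fin n → ℝ =>
        ∏ j ∈ Finset.univ.erase k, (1 + ε j * ξ j))
        = fun ξ => ∏ j, (Set.Icc (-1:ℝ) 1).indicator (fun x => 1 + c j * x) (ξ j) := by
      funext ξ
      by_cases h : ξ ∈ S
      · rw [Set.indicator_of_mem h]
        have hmem : ∀ j, ξ j ∈ Set.Icc (-1:ℝ) 1 := fun j => h j (Set.mem_univ j)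
        calc ∏ j ∈ Finset.univ.erase k, (1 + ε j * ξ j)
            = ∏ j, (1 + c j * ξ j) := by
              have heq : ∏ j ∈ Finset.univ.erase k, (1 + c j * ξ j)
                  = ∏ j ∈ Finset.univ.erase k, (1 + ε j * ξ j) :=
                Finset.prod_congr rfl fun j hj => by rw [hcj j hj]
              rw [← Finset.mul_prod_erase _ (fun j => 1 + c j * ξ j) (Finset.mem_univ k),
                hck, heq]
              ring
          _ = _ := Finset.prod_congr rfl fun j _ => by
              rw [Set.indicator_of_mem (hmem j)]
      · rw [Set.indicator_of_notMem h]
        rw [hSdef] at h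
        simp only [Set.mem_pi, Set.mem_univ, forall_true_left] at h
        push_neg at h
        obtain ⟨j, hj⟩ := h
        refine (Finset.prod_eq_zero (Finset.mem_univ j) ?_).symm
        rw [Set.indicator_of_notMem hj]
    rw [hident, MeasureTheory.integral_fintype_prod_volume_eq_prod
      (f := fun j (x : ℝ) => (Set.Icc (-1:ℝ) 1).indicator (fun x => 1 + c j * x) x)]
    have hone : ∀ j : Fin n, (∫ x : ℝ, (Set.Icc (-1:ℝ) 1).indicator
        (fun x => 1 + c j * x) x) = 2 := fun j => by
      rw [integral_indicator measurableSet_Icc, icc_lin_integral]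
    rw [Finset.prod_congr rfl fun j _ => hone j, Finset.prod_const, Finset.card_univ,
      Fintype.card_fin]
  rw [hprod, measureReal_def, hvol]
  rw [ENNReal.toReal_pow, ENNReal.toReal_ofReal (by norm_num)]
  simp [smul_eq_mul]
  ring

/-- The Morley-type vertex basis function
`p_{0i}(ξ) = 2^{-(n+1)} (2 + Σ_k (ε_k ξ_k - ξ_k²)) Π_k (1+ε_k ξ_k)
            + 3·2^{-(n+3)} Σ_k ε_k ξ_k (ξ_k²-1)²`
(with sign vector `ε ∈ {-1,1}^n`) has the property that on the face `ξ_k = σ`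
(`σ = ±1`) its second derivative in `ξ_k` equals
`-σ (3/2^n) ε_k Π_{j≠k}(1+ε_j ξ_j) + σ (3/2^n) ε_k`, and hence the integral of this
second derivative over the face vanishes. -/
theorem morley_p0_second_normal_derivative (n : ℕ) (hn : 2 ≤ n)
    (ε : Fin n → ℝ) (hε : ∀ i, ε i = 1 ∨ ε i = -1)
    (k : Fin n) (σ : ℝ) (hσ : σ = 1 ∨ σ = -1)
    (p : (Fin n → ℝ) → ℝ)
    (hp : ∀ ξ, p ξ =
      (1 / 2 ^ (n + 1)) * (2 + ∑ j, (ε j * ξ j - ξ j ^ 2)) * ∏ j, (1 + ε j * ξ j)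
        + (3 / 2 ^ (n + 3)) * ∑ j, ε j * ξ j * (ξ j ^ 2 - 1) ^ 2) :
    (∀ ξ : Fin n → ℝ,
      deriv (deriv (fun t => p (Function.update ξ k t))) σ =
        -σ * (3 / 2 ^ n) * ε k * ∏ j ∈ Finset.univ.erase k, (1 + ε j * ξ j)
          + σ * (3 / 2 ^ n) * ε k) ∧
    ∫ ξ in (Set.univ.pi fun _ : Fin n => Set.Icc (-1 : ℝ) 1),
      deriv (deriv (fun t => p (Function.update ξ k t))) σ = 0 := by
  have part1 : ∀ ξ : Fin n → ℝ,
      deriv (deriv (fun t => p (Function.update ξ k t))) σ =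
        -σ * (3 / 2 ^ n) * ε k * ∏ j ∈ Finset.univ.erase k, (1 + ε j * ξ j)
          + σ * (3 / 2 ^ n) * ε k := by
    intro ξ
    set S := ∑ j ∈ Finset.univ.erase k, (ε j * ξ j - ξ j ^ 2) with hS
    set C := ∏ j ∈ Finset.univ.erase k, (1 + ε j * ξ j) with hC
    set B := ∑ j ∈ Finset.univ.erase k, ε j * ξ j * (ξ j ^ 2 - 1) ^ 2 with hB
    set c1 : ℝ := 1 / 2 ^ (n + 1) with hc1
    set c2 : ℝ := 3 / 2 ^ (n + 3) with hc2
    set e := ε k with he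
    have hf : (fun t => p (Function.update ξ k t)) = fun t =>
        (c1*C*(2+S) + c2*B) + (c1*C*e*(3+S) + c2*e)*t + (c1*C*(e^2-1))*t^2
          + (-(c1*C*e) - 2*c2*e)*t^3 + (c2*e)*t^5 := by
      funext t
      rw [hp]
      have h1 : ∑ j, (ε j * Function.update ξ k t j - Function.update ξ k t j ^ 2)
          = (e * t - t ^ 2) + S := by
        rw [hS, ← Finset.add_sum_erase _ _ (Finset.mem_univ k), Function.update_self]
        exact congrArg _ (Finset.sum_congr rfl fun j hj => by
          rw [Function.update_of_ne (Finset.ne_of_mem_erase hj)])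
      have h2 : ∏ j, (1 + ε j * Function.update ξ k t j) = (1 + e * t) * C := by
        rw [hC, ← Finset.mul_prod_erase _ _ (Finset.mem_univ k), Function.update_self]
        exact congrArg _ (Finset.prod_congr rfl fun j hj => by
          rw [Function.update_of_ne (Finset.ne_of_mem_erase hj)])
      have h3 : ∑ j, ε j * Function.update ξ k t j * (Function.update ξ k t j ^ 2 - 1) ^ 2
          = e * t * (t ^ 2 - 1) ^ 2 + B := by
        rw [hB, ← Finset.add_sum_erase _ _ (Finset.mem_univ k), Function.update_self]
        exact congrArg _ (Finset.sum_congr rfl fun j hj => by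
          rw [Function.update_of_ne (Finset.ne_of_mem_erase hj)])
      rw [h1, h2, h3]
      ring
    rw [hf, second_deriv_poly]
    have he2 : e ^ 2 = 1 := by rcases hε k with h | h <;> rw [he, h] <;> norm_num
    have hσ3 : σ ^ 3 = σ := by rcases hσ with h | h <;> rw [h] <;> norm_num
    have h2n : (2:ℝ) ^ n ≠ 0 := by positivity
    rw [hσ3, he2, hc1, hc2]
    field_simp
    ring
  refine ⟨part1, ?_⟩
  have heq : (fun ξ : Fin n → ℝ => deriv (deriv (fun t => p (Function.update ξ k t))) σ)
      = fun ξ => -σ * (3 / 2 ^ n) * ε k * ∏ j ∈ Finset.univ.erase k, (1 + ε j * ξ j)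
          + σ * (3 / 2 ^ n) * ε k := funext part1
  rw [heq]
  exact cube_integral_zero n ε k σ (ε k)
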